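/- Let λ, μ₁, μ₂ > 0 be real numbers, define π₀ = μ₁μ₂/((μ₁+λ)(μ₂+λ)), π₁ = (λ/μ₁)·((μ₁+μ₂+λ)/(μ₁+μ₂))·π₀, π₂ = (λ/μ₂)·π₀, and π₃ = (λ²/(μ₂(μ₁+μ₂)))·π₀, and suppose the real numbers v₀₀, v₁₀, v₁₁, v₂₀, v₂₂, v₃₀, v₃₁, v₃₂ satisfy: v₀₀·λ = π₀ + μ₂·v₂₂; v₁₀·μ₁ = π₁ + λ·v₀₀ + μ₂·v₃₂; v₁₁·(λ+μ₁) = π₁ + μ₂·v₃₁; v₂₀·(λ+μ₂) = π₂ + μ₁·v₁₀ + μ₁·v₃₀; v₂₂·(λ+μ₂) = π₂ + μ₁·v₁₁ + μ₁·v₃₁; v₃₀·(μ₁+μ₂) = π₃ + λ·v₂₀; v₃₁·(λ+μ₁+μ₂) = π₃; v₃₂·(μ₁+μ₂) = π₃ + λ·v₂₂. Then v₀₀ + v₁₀ + v₂₀ + v₃₀ = 1/λ + 1/μ₁ + 1/μ₂. -/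
import Mathlib

/-- The eight nontrivial SHS stationary balance equations for the two-node
preemptive line network imply that the average age at the monitor is
`v₀₀ + v₁₀ + v₂₀ + v₃₀ = 1/λ + 1/μ₁ + 1/μ₂`. -/
theorem two_node_age (lam μ1 μ2 : ℝ) (hlam : 0 < lam) (hμ1 : 0 < μ1) (hμ2 : 0 < μ2)
    (π0 π1 π2 π3 : ℝ)
    (hπ0 : π0 = μ1 * μ2 / ((μ1 + lam) * (μ2 + lam)))
    (hπ1 : π1 = (lam / μ1) * ((μ1 + μ2 + lam) / (μ1 + μ2)) * π0)
    (hπ2 : π2 = (lam / μ2) * π0)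
    (hπ3 : π3 = (lam ^ 2 / (μ2 * (μ1 + μ2))) * π0)
    (v00 v10 v11 v20 v22 v30 v31 v32 : ℝ)
    (h1 : v00 * lam = π0 + μ2 * v22)
    (h2 : v10 * μ1 = π1 + lam * v00 + μ2 * v32)
    (h3 : v11 * (lam + μ1) = π1 + μ2 * v31)
    (h4 : v20 * (lam + μ2) = π2 + μ1 * v10 + μ1 * v30)
    (h5 : v22 * (lam + μ2) = π2 + μ1 * v11 + μ1 * v31)
    (h6 : v30 * (μ1 + μ2) = π3 + lam * v20)
    (h7 : v31 * (lam + μ1 + μ2) = π3)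
    (h8 : v32 * (μ1 + μ2) = π3 + lam * v22) :
    v00 + v10 + v20 + v30 = 1 / lam + 1 / μ1 + 1 / μ2 := by
  have hlam' := hlam.ne'
  have hμ1' := hμ1.ne'
  have hμ2' := hμ2.ne'
  have h12 : (μ1 + μ2) ≠ 0 := by positivity
  have h1l : (μ1 + lam) ≠ 0 := by positivity
  have h2l : (μ2 + lam) ≠ 0 := by positivity
  have hsum : π0 + π1 + π2 + π3 = 1 := by
    subst hπ1 hπ2 hπ3 hπ0
    field_simp
    ring
  have key : (v00 + v10 + v20 + v30) * (lam * μ1 * μ2) = μ1 * μ2 + lam * μ2 + lam * μ1 := by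
    linear_combination (μ1*μ2 + lam*μ2 + lam*μ1) * h1 + (lam*μ2 + lam*μ1) * h2 + (μ1*μ2) * h3 +
      (lam*μ1) * h4 + ((lam + μ1)*μ2) * h5 + (lam*μ1) * h6 + (μ1*μ2) * h7 + (lam*μ2) * h8 +
      (μ1*μ2 + lam*μ2 + lam*μ1) * hsum
  field_simp
  linear_combination key
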